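/- Let k be a σ-ring, A a k-σ-algebra that is faithfully flat as a k-module, and B a commutative A-algebra with a ring endomorphism σ_B satisfying σ_B(algebraMap A B a) = algebraMap A B (σ_A a) for all a ∈ A. Let τ_{B⊗A} and τ_{A⊗B} be the ring endomorphisms of B ⊗[k] A and A ⊗[k] B determined by b ⊗ a ↦ σ_B(b) ⊗ σ_A(a) and a ⊗ b ↦ σ_A(a) ⊗ σ_B(b). Suppose φ : B ⊗[k] A → A ⊗[k] B is an isomorphism of k-algebras such that: (1) φ((algebraMap A B a) ⊗ a') = a ⊗ (algebraMap A B a') for all a, a' ∈ A; (2) φ ∘ τ_{B⊗A} = τ_{A⊗B} ∘ φ; (3) φ₁₃ = φ₂₃ ∘ φ₁₂, where φ₁₂ : B ⊗[k] A ⊗[k] A → A ⊗[k] B ⊗[k] A, φ₂₃ : A ⊗[k] B ⊗[k] A → A ⊗[k] A ⊗[k] B, and φ₁₃ : B ⊗[k] A ⊗[k] A → A ⊗[k] A ⊗[k] B are the k-algebra homomorphisms determined on pure tensors by φ₁₂(b ⊗ a ⊗ a') = φ(b ⊗ a) ⊗ a', φ₂₃(a ⊗ b ⊗ a') = a ⊗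 φ(b ⊗ a'), and φ₁₃(b ⊗ a ⊗ a') = (1 ⊗ a ⊗ 1) · ι(φ(b ⊗ a')) with ι : A ⊗[k] B → A ⊗[k] A ⊗[k] B the k-algebra homomorphism determined by ι(a ⊗ b) = a ⊗ 1 ⊗ b. Define B₀ = {b ∈ B | φ(b ⊗ 1) = 1 ⊗ b}. Then B₀ is a k-subalgebra of B with σ_B(B₀) ⊆ B₀, and the k-algebra homomorphism A ⊗[k] B₀ → B determined by a ⊗ b ↦ (algebraMap A B a) · b is bijective. (This is faithfully flat descent for difference algebras: a descent datum on an A-σ-algebra descends it to a k-σ-algebra.) -/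

import Mathlib

open TensorProduct

set_option maxHeartbeats 1600000
set_option synthInstance.maxHeartbeats 400000


private lemma faithfully_flat_descent_aux_bijective
    (k A : Type*) [CommRing k] [CommRing A] [Algebra k A] [Module.FaithfullyFlat k A]
    {N P : Type*} [AddCommGroup N] [Module k N] [AddCommGroup P] [Module k P]
    (f : N →ₗ[k] P) (h : Function.Bijective (LinearMap.lTensor A f)) :
    Function.Bijective f := by
  constructor
  · have hkerz : (LinearMap.ker f).subtype = 0 := by
      rw [Module.FaithfullyFlat.zero_iff_lTensor_zero k A]
      have hz : f ∘ₗ (LinearMap.ker f).subtype = 0 := by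
        apply LinearMap.ext
        rintro ⟨b, hb⟩
        simpa using hb
      have h2' : LinearMap.lTensor A f ∘ₗ LinearMap.lTensor A (LinearMap.ker f).subtype = 0 := by
        rw [← LinearMap.lTensor_comp, hz, LinearMap.lTensor_zero]
      apply LinearMap.ext
      intro x
      apply h.1
      have hx := LinearMap.congr_fun h2' x
      rw [LinearMap.comp_apply] at hx
      rw [hx]
      simp
    have : LinearMap.ker f = ⊥ := by
      rw [eq_bot_iff]
      intro x hx
      have := LinearMap.congr_fun hkerz ⟨x, hx⟩
      simpa using this
    exact LinearMap.ker_eq_bot.mp this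
  · have hz : (LinearMap.range f).mkQ = 0 := by
      rw [Module.FaithfullyFlat.zero_iff_lTensor_zero k A]
      have hz0 : (LinearMap.range f).mkQ ∘ₗ f = 0 := by
        apply LinearMap.ext
        intro b
        simp [Submodule.Quotient.mk_eq_zero]
      have h2' : LinearMap.lTensor A (LinearMap.range f).mkQ ∘ₗ LinearMap.lTensor A f = 0 := by
        rw [← LinearMap.lTensor_comp, hz0, LinearMap.lTensor_zero]
      apply LinearMap.ext
      intro y
      obtain ⟨z, rfl⟩ := h.2 y
      have hy := LinearMap.congr_fun h2' z
      rw [LinearMap.comp_apply] at hy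
      rw [hy]
      simp
    intro b
    have hb : b ∈ LinearMap.range f := by
      rw [← Submodule.Quotient.mk_eq_zero]
      exact LinearMap.congr_fun hz b
    obtain ⟨x, hx⟩ := hb
    exact ⟨x, hx⟩

/-- Faithfully flat descent for difference algebras: a descent datum `φ` on an
`A`-σ-algebra `B` descends it to the `k`-σ-algebra
`B₀ = {b ∈ B | φ(b ⊗ 1) = 1 ⊗ b}`, i.e. `B₀` is a `k`-subalgebra of `B` stable
under `σ` and the multiplication map `A ⊗[k] B₀ → B` is bijective. -/
theorem faithfully_flat_descent_difference_algebras
    (k A B : Type*) [CommRing k]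
    [CommRing A] [Algebra k A] [Module.FaithfullyFlat k A]
    [CommRing B] [Algebra k B] [Algebra A B] [IsScalarTower k A B]
    (σk : k →+* k) (σA : A →+* A) (σB : B →+* B)
    (hσA : ∀ c : k, σA (algebraMap k A c) = algebraMap k A (σk c))
    (hσB : ∀ a : A, σB (algebraMap A B a) = algebraMap A B (σA a))
    (τBA : B ⊗[k] A →+* B ⊗[k] A)
    (hτBA : ∀ (b : B) (a : A), τBA (b ⊗ₜ[k] a) = σB b ⊗ₜ[k] σA a)
    (τAB : A ⊗[k] B →+* A ⊗[k] B)
    (hτAB : ∀ (a : A) (b : B), τAB (a ⊗ₜ[k] b) = σA a ⊗ₜ[k] σB b)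
    (φ : (B ⊗[k] A) ≃ₐ[k] (A ⊗[k] B))
    (h1 : ∀ a a' : A, φ ((algebraMap A B a) ⊗ₜ[k] a') = a ⊗ₜ[k] (algebraMap A B a'))
    (h2 : ∀ x : B ⊗[k] A, φ (τBA x) = τAB (φ x))
    (φ13 : ((B ⊗[k] A) ⊗[k] A) →ₐ[k] (A ⊗[k] (A ⊗[k] B)))
    (hφ13 : ∀ (b : B) (a a' : A),
      φ13 ((b ⊗ₜ[k] a) ⊗ₜ[k] a') =
        ((1 : A) ⊗ₜ[k] (a ⊗ₜ[k] (1 : B))) *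
          (Algebra.TensorProduct.map (AlgHom.id k A)
            (Algebra.TensorProduct.includeRight : B →ₐ[k] A ⊗[k] B))
            (φ (b ⊗ₜ[k] a')))
    (h3 : ∀ x : (B ⊗[k] A) ⊗[k] A,
      φ13 x =
        (Algebra.TensorProduct.map (AlgHom.id k A) φ.toAlgHom)
          ((Algebra.TensorProduct.assoc k k k A B A)
            ((Algebra.TensorProduct.map φ.toAlgHom (AlgHom.id k A)) x))) :
    ∃ S : Subalgebra k B,
      (S : Set B) = {b : B | φ (b ⊗ₜ[k] (1 : A)) = (1 : A) ⊗ₜ[k] b} ∧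
      (∀ b ∈ S, σB b ∈ S) ∧
      Function.Bijective
        (Algebra.TensorProduct.productMap (IsScalarTower.toAlgHom k A B) S.val) := by
  classical
  -- θ b = φ (b ⊗ 1), ρ b = 1 ⊗ b
  set θ : B →ₐ[k] A ⊗[k] B :=
    (φ.toAlgHom).comp (Algebra.TensorProduct.includeLeft) with hθdef
  set ρ : B →ₐ[k] A ⊗[k] B := Algebra.TensorProduct.includeRight with hρdef
  have hθ : ∀ b : B, θ b = φ (b ⊗ₜ[k] (1 : A)) := fun b => rfl
  have hρ : ∀ b : B, ρ b = (1 : A) ⊗ₜ[k] b := fun b => rfl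
  set S : Subalgebra k B := AlgHom.equalizer θ ρ with hSdef
  have hmemS : ∀ b : B, b ∈ S ↔ φ (b ⊗ₜ[k] (1 : A)) = (1 : A) ⊗ₜ[k] b := by
    intro b
    rw [hSdef, AlgHom.mem_equalizer, hθ, hρ]
  refine ⟨S, ?_, ?_, ?_⟩
  · ext b
    simpa using hmemS b
  · intro b hb
    rw [hmemS] at hb ⊢
    have e1 : σB b ⊗ₜ[k] (1 : A) = τBA (b ⊗ₜ[k] (1 : A)) := by
      rw [hτBA, map_one]
    rw [e1, h2, hb, hτAB, map_one]
  · -- Main part: bijectivity of the multiplication map A ⊗ S → B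
    -- q : A ⊗ B → B, a ⊗ b ↦ (algebraMap A B a) * b
    set q : A ⊗[k] B →ₐ[k] B :=
      Algebra.TensorProduct.productMap (IsScalarTower.toAlgHom k A B) (AlgHom.id k B) with hqdef
    have hq : ∀ (a : A) (b : B), q (a ⊗ₜ[k] b) = algebraMap A B a * b := by
      intro a b
      rw [hqdef, Algebra.TensorProduct.productMap_apply_tmul]
      rfl
    -- T : A ⊗ (A ⊗ B) → A ⊗ B, a ⊗ x ↦ a ⊗ q x
    set T : A ⊗[k] (A ⊗[k] B) →ₐ[k] A ⊗[k] B :=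
      Algebra.TensorProduct.map (AlgHom.id k A) q with hTdef
    set R' : A ⊗[k] B →ₐ[k] A ⊗[k] B :=
      Algebra.TensorProduct.map (AlgHom.id k A) (q.comp θ) with hR'def
    have hθalg : ∀ a : A, θ (algebraMap A B a) = a ⊗ₜ[k] (1 : B) := by
      intro a
      rw [hθ, h1 a 1, map_one]
    have hkey : ∀ (b : B) (a : A),
        φ (b ⊗ₜ[k] a) = ((1 : A) ⊗ₜ[k] algebraMap A B a) * φ (b ⊗ₜ[k] (1 : A)) := by
      intro b a
      have h1a : φ ((1 : B) ⊗ₜ[k] a) = (1 : A) ⊗ₜ[k] algebraMap A B a := by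
        simpa using h1 1 a
      calc φ (b ⊗ₜ[k] a) = φ (((1 : B) ⊗ₜ[k] a) * (b ⊗ₜ[k] (1 : A))) := by
            rw [Algebra.TensorProduct.tmul_mul_tmul, one_mul, mul_one]
        _ = _ := by rw [map_mul, h1a]
    -- the "F" map computation
    have hF : ∀ x : A ⊗[k] B,
        (Algebra.TensorProduct.map (AlgHom.id k A) φ.toAlgHom)
          ((Algebra.TensorProduct.assoc k k k A B A) (x ⊗ₜ[k] (1 : A)))
        = (Algebra.TensorProduct.map (AlgHom.id k A) θ) x := by
      intro x
      induction x using TensorProduct.induction_on with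
      | zero => simp
      | tmul c d =>
        rw [Algebra.TensorProduct.assoc_tmul, Algebra.TensorProduct.map_tmul,
          Algebra.TensorProduct.map_tmul, hθ]
        rfl
      | add u v hu hv =>
        rw [add_tmul, map_add, map_add, hu, hv, map_add]
    have hTθ : ∀ x : A ⊗[k] B,
        T ((Algebra.TensorProduct.map (AlgHom.id k A) θ) x) = R' x := by
      intro x
      induction x using TensorProduct.induction_on with
      | zero => simp
      | tmul c d =>
        rw [hTdef, hR'def, Algebra.TensorProduct.map_tmul, Algebra.TensorProduct.map_tmul]
        rfl
      | add u v hu hv => simp [map_add, hu, hv]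
    have hTρ : ∀ x : A ⊗[k] B,
        T ((Algebra.TensorProduct.map (AlgHom.id k A) ρ) x) = x := by
      intro x
      induction x using TensorProduct.induction_on with
      | zero => simp
      | tmul c d =>
        rw [hρdef, Algebra.TensorProduct.map_tmul, Algebra.TensorProduct.includeRight_apply,
          hTdef, Algebra.TensorProduct.map_tmul, hq, map_one, one_mul]
        rfl
      | add u v hu hv => simp [map_add, hu, hv]
    -- counit : q ∘ θ = id
    have hR' : ∀ x : A ⊗[k] B, R' x = x := by
      have key : ∀ y : B ⊗[k] A, R' (φ y) = φ y := by
        intro y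
        induction y using TensorProduct.induction_on with
        | zero =>
          have h0 : φ (0 : B ⊗[k] A) = 0 := map_zero φ
          rw [h0, map_zero]
        | tmul b a =>
          have e3 := h3 ((b ⊗ₜ[k] a) ⊗ₜ[k] (1 : A))
          rw [hφ13 b a 1] at e3
          have e4 := congrArg T e3
          rw [map_mul] at e4
          have eT1 : T ((1 : A) ⊗ₜ[k] (a ⊗ₜ[k] (1 : B)))
              = (1 : A) ⊗ₜ[k] algebraMap A B a := by
            rw [hTdef, Algebra.TensorProduct.map_tmul, hq, mul_one, map_one]
          rw [eT1, hTρ] at e4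
          have e5 : (Algebra.TensorProduct.map φ.toAlgHom (AlgHom.id k A))
              ((b ⊗ₜ[k] a) ⊗ₜ[k] (1 : A)) = φ (b ⊗ₜ[k] a) ⊗ₜ[k] (1 : A) := by
            simp
          rw [e5, hF, hTθ] at e4
          rw [← e4]
          exact (hkey b a).symm
        | add u v hu hv => rw [map_add, map_add, hu, hv]
      intro x
      have := key (φ.symm x)
      simpa using this
    have hcounit : ∀ b : B, q (θ b) = b := by
      have hz : (q.comp θ).toLinearMap - LinearMap.id = 0 := by
        rw [Module.FaithfullyFlat.zero_iff_lTensor_zero k A]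
        apply TensorProduct.ext'
        intro a b
        have h := hR' (a ⊗ₜ[k] b)
        rw [hR'def, Algebra.TensorProduct.map_tmul] at h
        simp only [LinearMap.lTensor_tmul, LinearMap.sub_apply, LinearMap.id_apply,
          LinearMap.zero_apply, AlgHom.toLinearMap_apply]
        rw [tmul_sub]
        rw [show (AlgHom.id k A) a = a from rfl] at h
        rw [h, sub_self]
      intro b
      have := LinearMap.congr_fun hz b
      simpa [sub_eq_zero] using this
    -- cocycle consequence
    have hcoc : ∀ b : B,
        (Algebra.TensorProduct.map (AlgHom.id k A) θ) (θ b)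
          = (Algebra.TensorProduct.map (AlgHom.id k A) ρ) (θ b) := by
      intro b
      have e3 := h3 ((b ⊗ₜ[k] (1 : A)) ⊗ₜ[k] (1 : A))
      rw [hφ13 b 1 1] at e3
      have eone : ((1 : A) ⊗ₜ[k] ((1 : A) ⊗ₜ[k] (1 : B))) = (1 : A ⊗[k] (A ⊗[k] B)) := by
        rw [Algebra.TensorProduct.one_def, Algebra.TensorProduct.one_def]
      rw [eone, one_mul] at e3
      have e5 : (Algebra.TensorProduct.map φ.toAlgHom (AlgHom.id k A))
          ((b ⊗ₜ[k] (1 : A)) ⊗ₜ[k] (1 : A)) = φ (b ⊗ₜ[k] (1 : A)) ⊗ₜ[k] (1 : A) := by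
        simp
      rw [e5, hF] at e3
      rw [← hθ] at e3
      exact e3.symm
    -- linear map setup
    set inclS : (↥S) →ₗ[k] B := S.val.toLinearMap with hinclSdef
    set g : B →ₗ[k] A ⊗[k] B := θ.toLinearMap - ρ.toLinearMap with hgdef
    have hmapl : ∀ (f : B →ₐ[k] A ⊗[k] B) (x : A ⊗[k] B),
        LinearMap.lTensor A f.toLinearMap x
          = (Algebra.TensorProduct.map (AlgHom.id k A) f) x := by
      intro f x
      induction x using TensorProduct.induction_on with
      | zero => simp
      | tmul c d => simp
      | add u v hu hv => simp [map_add, hu, hv]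
    have hexact : Function.Exact inclS g := by
      intro b
      constructor
      · intro hb
        have hbS : b ∈ S := by
          rw [hSdef, AlgHom.mem_equalizer]
          have : θ b - ρ b = 0 := by
            simpa [hgdef] using hb
          exact sub_eq_zero.mp this
        exact ⟨⟨b, hbS⟩, rfl⟩
      · rintro ⟨⟨b', hb'⟩, rfl⟩
        have h := (AlgHom.mem_equalizer θ ρ b').mp hb'
        show g (inclS ⟨b', hb'⟩) = 0
        rw [hgdef]
        simp only [LinearMap.sub_apply, AlgHom.toLinearMap_apply]
        rw [sub_eq_zero]
        exact h
    have htex : Function.Exact (LinearMap.lTensor A inclS) (LinearMap.lTensor A g) :=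
      Module.Flat.lTensor_exact A hexact
    have hrange : ∀ b : B, θ b ∈ Set.range (LinearMap.lTensor A inclS) := by
      intro b
      refine (htex (θ b)).mp ?_
      have : LinearMap.lTensor A g (θ b)
          = LinearMap.lTensor A θ.toLinearMap (θ b)
            - LinearMap.lTensor A ρ.toLinearMap (θ b) := by
        rw [hgdef, LinearMap.lTensor_sub, LinearMap.sub_apply]
      rw [this, hmapl, hmapl, hcoc b, sub_self]
    have hinj : Function.Injective (LinearMap.lTensor A inclS) := by
      apply Module.Flat.lTensor_preserves_injective_linearMap
      exact Subtype.val_injective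
    have hrange' : ∀ b : B, θ.toLinearMap b ∈ LinearMap.range (LinearMap.lTensor A inclS) := by
      intro b
      rw [LinearMap.mem_range]
      obtain ⟨z, hz⟩ := hrange b
      exact ⟨z, hz⟩
    set θt : B →ₗ[k] A ⊗[k] (↥S) :=
      LinearMap.codRestrictOfInjective θ.toLinearMap (LinearMap.lTensor A inclS) hinj hrange'
      with hθtdef
    have hθt : ∀ b : B, LinearMap.lTensor A inclS (θt b) = θ b := by
      intro b
      rw [hθtdef]
      exact LinearMap.codRestrictOfInjective_comp_apply θ.toLinearMap
        (LinearMap.lTensor A inclS) hinj hrange' b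
    set μ : A ⊗[k] (↥S) →ₐ[k] B :=
      Algebra.TensorProduct.productMap (IsScalarTower.toAlgHom k A B) S.val with hμdef
    have hμq : ∀ x : A ⊗[k] (↥S), μ x = q (LinearMap.lTensor A inclS x) := by
      intro x
      induction x using TensorProduct.induction_on with
      | zero => simp
      | tmul a s =>
        rw [hμdef, Algebra.TensorProduct.productMap_apply_tmul, LinearMap.lTensor_tmul, hq]
        rfl
      | add u v hu hv => simp [map_add, hu, hv]
    have hμθt : ∀ b : B, μ (θt b) = b := by
      intro b
      rw [hμq, hθt, hcounit]
    have hθS : ∀ s : ↥S, θ (S.val s) = (1 : A) ⊗ₜ[k] (S.val s) := by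
      intro s
      have h := (AlgHom.mem_equalizer θ ρ (s : B)).mp s.2
      rw [show θ (S.val s) = θ (s : B) from rfl, h, hρ]
      rfl
    have hθtμ : ∀ x : A ⊗[k] (↥S), θt (μ x) = x := by
      intro x
      apply hinj
      rw [hθt]
      induction x using TensorProduct.induction_on with
      | zero => simp
      | tmul a s =>
        rw [hμdef, Algebra.TensorProduct.productMap_apply_tmul, map_mul]
        have e1 : θ ((IsScalarTower.toAlgHom k A B) a) = a ⊗ₜ[k] (1 : B) := hθalg a
        rw [e1, hθS, LinearMap.lTensor_tmul, Algebra.TensorProduct.tmul_mul_tmul,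
          mul_one, one_mul]
        rfl
      | add u v hu hv => rw [map_add, map_add, hu, hv, map_add]
    have hcomp1 : μ.toLinearMap ∘ₗ θt = LinearMap.id := LinearMap.ext hμθt
    have hcomp2 : θt ∘ₗ μ.toLinearMap = LinearMap.id := LinearMap.ext hθtμ
    have hcompT : LinearMap.lTensor A θt ∘ₗ LinearMap.lTensor A μ.toLinearMap
        = LinearMap.id := by
      rw [← LinearMap.lTensor_comp, hcomp2, LinearMap.lTensor_id]
    have hcompT' : ∀ w, LinearMap.lTensor A θt (LinearMap.lTensor A μ.toLinearMap w) = w := by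
      intro w
      have h := LinearMap.congr_fun hcompT w
      simpa using h
    have hcompM : LinearMap.lTensor A μ.toLinearMap ∘ₗ LinearMap.lTensor A θt
        = LinearMap.id := by
      rw [← LinearMap.lTensor_comp, hcomp1, LinearMap.lTensor_id]
    have hcompM' : ∀ w, LinearMap.lTensor A μ.toLinearMap (LinearMap.lTensor A θt w) = w := by
      intro w
      have h := LinearMap.congr_fun hcompM w
      simpa using h
    have hbij : Function.Bijective (LinearMap.lTensor A μ.toLinearMap) := by
      constructor
      · intro x y hxy
        have h := congrArg (LinearMap.lTensor A θt) hxy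
        rwa [hcompT', hcompT'] at h
      · intro y
        exact ⟨LinearMap.lTensor A θt y, hcompM' y⟩
    have hbij2 : Function.Bijective μ.toLinearMap :=
      faithfully_flat_descent_aux_bijective k A μ.toLinearMap hbij
    exact hbij2
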